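/- Let f : X → Y be a closed irreducible continuous surjection between topological spaces. Then X is I-favorable if and only if Y is I-favorable. -/

import Mathlib

/-- A topological space `X` is I-favorable if there is a strategy `σ` assigning to each
finite (possibly empty) sequence of open subsets of `X` an open subset of `X` such that
whenever `B₀, B₁, …` are nonempty open sets with `B₀ ⊆ σ ∅` and `B_{k+1} ⊆ σ (B₀,…,B_k)`,
the union `⋃ k, B k` is dense in `X`. (For the empty space the nonemptiness requirement
on the values of `σ` is vacuous.) -/
def IFavorable (X : Type*) [TopologicalSpace X] : Prop :=
  ∃ σ : List (Set X) → Set X,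
    (∀ l, IsOpen (σ l)) ∧
    (∀ l, Nonempty X → (σ l).Nonempty) ∧
    ∀ B : ℕ → Set X, (∀ k, IsOpen (B k)) → (∀ k, (B k).Nonempty) →
      B 0 ⊆ σ [] →
      (∀ k, B (k + 1) ⊆ σ (List.ofFn fun i : Fin (k + 1) => B i)) →
      Dense (⋃ k, B k)

/-- `f : X → Y` is a closed irreducible continuous surjection: it is continuous, closed,
surjective, and `f '' F ≠ Y` for every proper closed subset `F ⊊ X`. -/
def ClosedIrreducibleSurjection {X Y : Type*} [TopologicalSpace X] [TopologicalSpace Y]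
    (f : X → Y) : Prop :=
  Continuous f ∧ IsClosedMap f ∧ Function.Surjective f ∧
    ∀ F : Set X, IsClosed F → F ≠ Set.univ → f '' F ≠ Set.univ

section Aux

variable {X Y : Type*} [TopologicalSpace X] [TopologicalSpace Y] {f : X → Y}

/-- The "small image" of a set: `y ∈ star f U` iff the whole fiber over `y` lies in `U`. -/
def starIm (f : X → Y) (U : Set X) : Set Y := (f '' Uᶜ)ᶜ

lemma mem_starIm {U : Set X} {y : Y} : y ∈ starIm f U ↔ ∀ x, f x = y → x ∈ U := by
  simp only [starIm, Set.mem_compl_iff, Set.mem_image, not_exists, not_and]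
  constructor
  · intro h x hx
    by_contra hxU
    exact h x hxU hx
  · intro h x hx hfx
    exact hx (h x hfx)

lemma isOpen_starIm (hcl : IsClosedMap f) {U : Set X} (hU : IsOpen U) :
    IsOpen (starIm f U) :=
  (hcl _ hU.isClosed_compl).isOpen_compl

lemma preimage_starIm_subset {U : Set X} : f ⁻¹' starIm f U ⊆ U := by
  intro x hx
  exact mem_starIm.mp hx x rfl

lemma starIm_nonempty (hf : ClosedIrreducibleSurjection f) {U : Set X}
    (hU : IsOpen U) (hne : U.Nonempty) : (starIm f U).Nonempty := by
  obtain ⟨-, -, -, hirr⟩ := hf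
  have h : f '' Uᶜ ≠ Set.univ := by
    apply hirr _ hU.isClosed_compl
    intro h
    obtain ⟨x, hx⟩ := hne
    have : x ∈ Uᶜ := h ▸ Set.mem_univ x
    exact this hx
  rcases Set.ne_univ_iff_exists_notMem _ |>.mp h with ⟨y, hy⟩
  exact ⟨y, hy⟩

lemma starIm_subset (hsurj : Function.Surjective f) {U : Set X} {V : Set Y}
    (h : U ⊆ f ⁻¹' V) : starIm f U ⊆ V := by
  intro y hy
  obtain ⟨x, rfl⟩ := hsurj y
  exact h (mem_starIm.mp hy x rfl)

lemma dense_preimage (hf : ClosedIrreducibleSurjection f) {s : Set Y}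
    (hs : Dense s) : Dense (f ⁻¹' s) := by
  obtain ⟨hc, hcl, hsurj, hirr⟩ := hf
  by_contra h
  have hne : closure (f ⁻¹' s) ≠ Set.univ := by
    intro he
    exact h (by rw [dense_iff_closure_eq, he])
  have him : f '' closure (f ⁻¹' s) ≠ Set.univ := hirr _ isClosed_closure hne
  apply him
  have hsub : s ⊆ f '' closure (f ⁻¹' s) := by
    intro y hy
    obtain ⟨x, rfl⟩ := hsurj y
    exact ⟨x, subset_closure hy, rfl⟩
  have hclosed : IsClosed (f '' closure (f ⁻¹' s)) := hcl _ isClosed_closure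
  have := hs.closure_eq ▸ closure_mono hsub
  rw [hclosed.closure_eq] at this
  exact Set.eq_univ_of_univ_subset this

lemma dense_image (hc : Continuous f) (hsurj : Function.Surjective f) {s : Set X}
    (hs : Dense s) : Dense (f '' s) := by
  rw [dense_iff_closure_eq]
  apply Set.eq_univ_of_univ_subset
  calc Set.univ = f '' Set.univ := (Set.image_univ.trans hsurj.range_eq).symm
    _ = f '' closure s := by rw [hs.closure_eq]
    _ ⊆ closure (f '' s) := image_closure_subset_closure_image hc

end Aux

/-- If `f : X → Y` is a closed irreducible continuous surjection, then
`X` is I-favorable if and only if `Y` is I-favorable. -/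
theorem ifavorable_iff_of_closedIrreducibleSurjection {X Y : Type*}
    [TopologicalSpace X] [TopologicalSpace Y] (f : X → Y)
    (hf : ClosedIrreducibleSurjection f) :
    IFavorable X ↔ IFavorable Y := by
  obtain ⟨hc, hcl, hsurj, hirr⟩ := hf
  constructor
  · rintro ⟨σ, hopen, hne, hwin⟩
    refine ⟨fun l => starIm f (σ (l.map (f ⁻¹' ·))), fun l => isOpen_starIm hcl (hopen _),
      fun l hY => ?_, fun B hBo hBne hB0 hBs => ?_⟩
    · have hX : Nonempty X := ⟨(hsurj (Classical.choice hY)).choose⟩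
      exact starIm_nonempty ⟨hc, hcl, hsurj, hirr⟩ (hopen _) (hne _ hX)
    · set A : ℕ → Set X := fun k => f ⁻¹' B k with hA
      have hAo : ∀ k, IsOpen (A k) := fun k => (hBo k).preimage hc
      have hAne : ∀ k, (A k).Nonempty := fun k => by
        obtain ⟨y, hy⟩ := hBne k
        exact ⟨(hsurj y).choose, by simp [hA, (hsurj y).choose_spec, hy]⟩
      have hA0 : A 0 ⊆ σ [] := fun x hx =>
        preimage_starIm_subset (Set.preimage_mono hB0 hx)
      have hAs : ∀ k, A (k + 1) ⊆ σ (List.ofFn fun i : Fin (k + 1) => A i) := by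
        intro k x hx
        have := Set.preimage_mono (hBs k) hx
        have h2 := preimage_starIm_subset this
        simpa [List.map_ofFn, Function.comp_def, hA] using h2
      have hdense : Dense (⋃ k, A k) := hwin A hAo hAne hA0 hAs
      have : Dense (f '' ⋃ k, A k) := dense_image hc hsurj hdense
      refine this.mono ?_
      rw [Set.image_iUnion]
      exact Set.iUnion_mono fun k => Set.image_preimage_subset f (B k)
  · rintro ⟨σ, hopen, hne, hwin⟩
    refine ⟨fun l => f ⁻¹' σ (l.map (starIm f)), fun l => (hopen _).preimage hc,
      fun l hX => ?_, fun A hAo hAne hA0 hAs => ?_⟩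
    · have hY : Nonempty Y := ⟨f (Classical.choice hX)⟩
      obtain ⟨y, hy⟩ := hne (l.map (starIm f)) hY
      exact ⟨(hsurj y).choose, by simp [(hsurj y).choose_spec, hy]⟩
    · set B : ℕ → Set Y := fun k => starIm f (A k) with hB
      have hBo : ∀ k, IsOpen (B k) := fun k => isOpen_starIm hcl (hAo k)
      have hBne : ∀ k, (B k).Nonempty := fun k =>
        starIm_nonempty ⟨hc, hcl, hsurj, hirr⟩ (hAo k) (hAne k)
      have hB0 : B 0 ⊆ σ [] := starIm_subset hsurj hA0
      have hBs : ∀ k, B (k + 1) ⊆ σ (List.ofFn fun i : Fin (k + 1) => B i) := by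
        intro k
        have := starIm_subset hsurj (hAs k)
        simpa [List.map_ofFn, Function.comp_def, hB] using this
      have hdense : Dense (⋃ k, B k) := hwin B hBo hBne hB0 hBs
      have : Dense (f ⁻¹' ⋃ k, B k) := dense_preimage ⟨hc, hcl, hsurj, hirr⟩ hdense
      refine this.mono ?_
      rw [Set.preimage_iUnion]
      exact Set.iUnion_mono fun k => preimage_starIm_subset
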